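/- Let A be a stochastic n×n real matrix such that the digraph on {1,…,n} with an edge from i to j iff i ≠ j and A_{ji} > 0 contains a spanning tree, and let 0 < τ̌ ≤ τ̂ be reals. Then there exists a vector f ∈ ℝ^n with f ≥ 0, Σ_i f_i = 1 and f^T A = f^T such that for every sequence (h_k)_{k∈ℕ} with h_k ∈ [τ̌, τ̂] for all k, the left products P_q = (e^{−h_{q−1}} I + (1 − e^{−h_{q−1}}) A) ⋯ (e^{−h_0} I + (1 − e^{−h_0}) A) converge entrywise, as q → ∞, to the rank-one matrix 1 f^T all of whose rows equal f^T. In particular, for every initial state x(0) ∈ ℝ^n the synchronous system reaches consensus on the group decision value f^T x(0), which is uniquely determined by A and x(0) (independently of the update times). -/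
import Mathlib

open Filter Topology Finset

namespace SyncCons

variable {n : ℕ}

/-- Row-stochastic predicate. -/
def Stoch (B : Matrix (Fin n) (Fin n) ℝ) : Prop :=
  (∀ i j, 0 ≤ B i j) ∧ (∀ i, ∑ j, B i j = 1)

lemma Stoch.one : Stoch (1 : Matrix (Fin n) (Fin n) ℝ) := by
  constructor
  · intro i j
    by_cases h : i = j <;> simp [Matrix.one_apply, h]
  · intro i; simp [Matrix.one_apply]

lemma Stoch.mul {B C : Matrix (Fin n) (Fin n) ℝ} (hB : Stoch B) (hC : Stoch C) :
    Stoch (B * C) := by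
  constructor
  · intro i j
    rw [Matrix.mul_apply]
    exact Finset.sum_nonneg fun k _ => mul_nonneg (hB.1 i k) (hC.1 k j)
  · intro i
    simp only [Matrix.mul_apply]
    rw [Finset.sum_comm]
    calc ∑ k, ∑ j, B i k * C k j = ∑ k, B i k * ∑ j, C k j := by
          simp [Finset.mul_sum]
      _ = 1 := by simp [hC.2, hB.2]

/-- Left product of a sequence of matrices. -/
def Wprod (Bs : ℕ → Matrix (Fin n) (Fin n) ℝ) : ℕ → Matrix (Fin n) (Fin n) ℝ
  | 0 => 1
  | m + 1 => Bs m * Wprod Bs m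

lemma Wprod_stoch {Bs : ℕ → Matrix (Fin n) (Fin n) ℝ} (h : ∀ k, Stoch (Bs k)) :
    ∀ m, Stoch (Wprod Bs m)
  | 0 => Stoch.one
  | m + 1 => (h m).mul (Wprod_stoch h m)

lemma prod_shift {B P : ℕ → Matrix (Fin n) (Fin n) ℝ}
    (h0 : P 0 = 1) (hrec : ∀ q, P (q + 1) = B q * P q) (q : ℕ) :
    ∀ m, P (q + m) = Wprod (fun k => B (q + k)) m * P q
  | 0 => by simp [Wprod]
  | m + 1 => by
    rw [show q + (m + 1) = (q + m) + 1 from rfl, hrec, prod_shift h0 hrec q m, Wprod, mul_assoc]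

/-- One-step upper/lower estimate with a δ-column. -/
lemma mulVec_est (H : (Finset.univ : Finset (Fin n)).Nonempty)
    {B : Matrix (Fin n) (Fin n) ℝ} (hB : Stoch B) {δ : ℝ} {r : Fin n}
    (hδ : ∀ i, δ ≤ B i r) (x : Fin n → ℝ) (i : Fin n) :
    δ * x r + (1 - δ) * univ.inf' H x ≤ B.mulVec x i ∧
      B.mulVec x i ≤ δ * x r + (1 - δ) * univ.sup' H x := by
  set c : Fin n → ℝ := fun k => if k = r then B i k - δ else B i k with hc
  have hcnn : ∀ k, 0 ≤ c k := by
    intro k; by_cases h : k = r <;> simp [hc, h]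
    · linarith [hδ i]
    · exact hB.1 i k
  have hcsum : ∑ k, c k = 1 - δ := by
    have h1 : ∀ k, c k = B i k - (if k = r then δ else 0) := by
      intro k; by_cases h : k = r <;> simp [hc, h]
    rw [Finset.sum_congr rfl fun k _ => h1 k, Finset.sum_sub_distrib, hB.2 i]
    simp
  have hsplit : B.mulVec x i = δ * x r + ∑ k, c k * x k := by
    rw [Matrix.mulVec, dotProduct]
    have : ∀ k, c k * x k = B i k * x k - (if k = r then δ * x k else 0) := by
      intro k; by_cases h : k = r <;> simp [hc, h] <;> ring
    rw [Finset.sum_congr rfl fun k _ => this k, Finset.sum_sub_distrib]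
    simp [mul_comm]
  constructor
  · rw [hsplit]
    have : (1 - δ) * univ.inf' H x = ∑ k, c k * univ.inf' H x := by
      rw [← Finset.sum_mul, hcsum]
    rw [this]
    gcongr with k
    · exact hcnn k
    · exact inf'_le _ (mem_univ k)
  · rw [hsplit]
    have : (1 - δ) * univ.sup' H x = ∑ k, c k * univ.sup' H x := by
      rw [← Finset.sum_mul, hcsum]
    rw [this]
    gcongr with k
    · exact hcnn k
    · exact le_sup' _ (mem_univ k)

lemma stoch_col_le_one {B : Matrix (Fin n) (Fin n) ℝ} (hB : Stoch B) {δ : ℝ} {r : Fin n}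
    (hδ : ∀ i, δ ≤ B i r) : δ ≤ 1 := by
  refine le_trans (hδ r) ?_
  rw [← hB.2 r]
  exact Finset.single_le_sum (fun j _ => hB.1 r j) (mem_univ r)

/-- Oscillation contraction. -/
lemma osc_contract (H : (Finset.univ : Finset (Fin n)).Nonempty)
    {B : Matrix (Fin n) (Fin n) ℝ} (hB : Stoch B) {δ : ℝ} {r : Fin n}
    (hδ : ∀ i, δ ≤ B i r) (x : Fin n → ℝ) :
    univ.sup' H (B.mulVec x) - univ.inf' H (B.mulVec x) ≤
      (1 - δ) * (univ.sup' H x - univ.inf' H x) := by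
  have hub : univ.sup' H (B.mulVec x) ≤ δ * x r + (1 - δ) * univ.sup' H x :=
    Finset.sup'_le _ _ fun i _ => (mulVec_est H hB hδ x i).2
  have hlb : δ * x r + (1 - δ) * univ.inf' H x ≤ univ.inf' H (B.mulVec x) :=
    Finset.le_inf' _ _ fun i _ => (mulVec_est H hB hδ x i).1
  nlinarith [hub, hlb]

lemma sup_mono (H : (Finset.univ : Finset (Fin n)).Nonempty)
    {B : Matrix (Fin n) (Fin n) ℝ} (hB : Stoch B) (x : Fin n → ℝ) :
    univ.sup' H (B.mulVec x) ≤ univ.sup' H x := by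
  have := fun i => (mulVec_est H hB (δ := 0) (r := H.choose) (fun i => hB.1 i _) x i).2
  refine Finset.sup'_le _ _ fun i _ => le_trans (this i) (by simp)

lemma inf_mono (H : (Finset.univ : Finset (Fin n)).Nonempty)
    {B : Matrix (Fin n) (Fin n) ℝ} (hB : Stoch B) (x : Fin n → ℝ) :
    univ.inf' H x ≤ univ.inf' H (B.mulVec x) := by
  have := fun i => (mulVec_est H hB (δ := 0) (r := H.choose) (fun i => hB.1 i _) x i).1
  refine Finset.le_inf' _ _ fun i _ => le_trans (by simp) (this i)

/-- Positivity of the (v, r) entry of long enough products, uniformly over the sequence. -/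
lemma reach_pos (E : Fin n → Fin n → Prop) (r : Fin n) {γ : ℝ} (hγ : 0 ≤ γ)
    {v : Fin n} (hrv : Relation.ReflTransGen E r v) :
    ∃ ℓ : ℕ, ∀ m, ℓ ≤ m → ∀ Bs : ℕ → Matrix (Fin n) (Fin n) ℝ,
      (∀ k, Stoch (Bs k) ∧ (∀ i, γ ≤ Bs k i i) ∧ ∀ i j, E i j → γ ≤ Bs k j i) →
      γ ^ m ≤ Wprod Bs m v r := by
  induction hrv with
  | refl =>
    refine ⟨0, fun m _ Bs hBs => ?_⟩
    induction m with
    | zero => simp [Wprod, Matrix.one_apply]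
    | succ m ih =>
      have hnn := (Wprod_stoch (fun k => (hBs k).1) m).1
      calc γ ^ (m + 1) = γ * γ ^ m := by ring
        _ ≤ Bs m r r * Wprod Bs m r r :=
          mul_le_mul ((hBs m).2.1 r) (ih (Nat.zero_le m)) (pow_nonneg hγ m) ((hBs m).1.1 r r)
        _ ≤ ∑ k, Bs m r k * Wprod Bs m k r :=
          Finset.single_le_sum (f := fun k => Bs m r k * Wprod Bs m k r)
            (fun k _ => mul_nonneg ((hBs m).1.1 r k) (hnn k r)) (mem_univ r)
        _ = Wprod Bs (m + 1) r r := by rw [Wprod, Matrix.mul_apply]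
  | @tail b c hab hbc ih =>
    obtain ⟨ℓ, hℓ⟩ := ih
    refine ⟨ℓ + 1, fun m hm Bs hBs => ?_⟩
    obtain ⟨m', rfl⟩ : ∃ m', m = m' + 1 := ⟨m - 1, by omega⟩
    have hnn := (Wprod_stoch (fun k => (hBs k).1) m').1
    calc γ ^ (m' + 1) = γ * γ ^ m' := by ring
      _ ≤ Bs m' c b * Wprod Bs m' b r :=
        mul_le_mul ((hBs m').2.2 b c hbc) (hℓ m' (by omega) Bs hBs)
          (pow_nonneg hγ m') ((hBs m').1.1 c b)
      _ ≤ ∑ k, Bs m' c k * Wprod Bs m' k r :=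
        Finset.single_le_sum (f := fun k => Bs m' c k * Wprod Bs m' k r)
          (fun k _ => mul_nonneg ((hBs m').1.1 c k) (hnn k r)) (mem_univ b)
      _ = Wprod Bs (m' + 1) c r := by rw [Wprod, Matrix.mul_apply]

/-- Main convergence: entries of `P q ⬝ x` all tend to a common limit. -/
lemma vec_conv (H : (Finset.univ : Finset (Fin n)).Nonempty) {δ : ℝ} (hδ : 0 < δ)
    {M : ℕ} (hM : 0 < M)
    {B : ℕ → Matrix (Fin n) (Fin n) ℝ} (hB : ∀ k, Stoch (B k)) {r : Fin n}
    (hwin : ∀ q v, δ ≤ Wprod (fun k => B (q + k)) M v r)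
    {P : ℕ → Matrix (Fin n) (Fin n) ℝ}
    (hP0 : P 0 = 1) (hPrec : ∀ q, P (q + 1) = B q * P q) (x : Fin n → ℝ) :
    ∃ c, ∀ i, Tendsto (fun q => (P q).mulVec x i) atTop (𝓝 c) := by
  set v : ℕ → Fin n → ℝ := fun q => (P q).mulVec x with hv
  have hvrec : ∀ q, v (q + 1) = (B q).mulVec (v q) := by
    intro q
    rw [hv]
    simp only [hPrec q, ← Matrix.mulVec_mulVec]
  set a : ℕ → ℝ := fun q => univ.sup' H (v q) with ha
  set b : ℕ → ℝ := fun q => univ.inf' H (v q) with hb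
  have hba : ∀ q, b q ≤ a q := by
    intro q
    obtain ⟨i0, hi0⟩ := H
    exact le_trans (inf'_le _ hi0) (le_sup' _ hi0)
  have haA : Antitone a := by
    refine antitone_nat_of_succ_le fun q => ?_
    rw [ha]; simp only [hvrec q]; exact sup_mono H (hB q) (v q)
  have hbM : Monotone b := by
    refine monotone_nat_of_le_succ fun q => ?_
    rw [hb]; simp only [hvrec q]; exact inf_mono H (hB q) (v q)
  have hδ1 : δ ≤ 1 :=
    stoch_col_le_one (Wprod_stoch (Bs := fun k => B (0 + k)) (fun k => hB _) M) (hwin 0)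
  have hosc_nn : ∀ q, 0 ≤ a q - b q := fun q => sub_nonneg.2 (hba q)
  have hosc_mono : ∀ p q, p ≤ q → a q - b q ≤ a p - b p := fun p q hpq =>
    sub_le_sub (haA hpq) (hbM hpq)
  have hosc_win : ∀ q, a (q + M) - b (q + M) ≤ (1 - δ) * (a q - b q) := by
    intro q
    have hw := prod_shift hP0 hPrec q M
    have hvw : v (q + M) = (Wprod (fun k => B (q + k)) M).mulVec (v q) := by
      rw [hv]; simp only [hw, ← Matrix.mulVec_mulVec]
    rw [ha, hb]
    simp only [hvw]
    exact osc_contract H (Wprod_stoch (Bs := fun k => B (q + k)) (fun k => hB _) M)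
      (hwin q) (v q)
  have hgeo : ∀ t, a (t * M) - b (t * M) ≤ (1 - δ) ^ t * (a 0 - b 0) := by
    intro t
    induction t with
    | zero => simp
    | succ t ih =>
      calc a ((t + 1) * M) - b ((t + 1) * M) = a (t * M + M) - b (t * M + M) := by
            rw [Nat.succ_mul]
        _ ≤ (1 - δ) * (a (t * M) - b (t * M)) := hosc_win (t * M)
        _ ≤ (1 - δ) * ((1 - δ) ^ t * (a 0 - b 0)) := by
            apply mul_le_mul_of_nonneg_left ih (by linarith)
        _ = (1 - δ) ^ (t + 1) * (a 0 - b 0) := by ring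
  have hosc_bound : ∀ q, a q - b q ≤ (1 - δ) ^ (q / M) * (a 0 - b 0) := fun q =>
    le_trans (hosc_mono _ _ (Nat.div_mul_le_self q M)) (hgeo (q / M))
  have hdiv : Tendsto (fun q : ℕ => q / M) atTop atTop := by
    refine tendsto_atTop_atTop.2 fun t => ⟨t * M, fun q hq => ?_⟩
    exact (Nat.le_div_iff_mul_le hM).2 hq
  have hosc0 : Tendsto (fun q => a q - b q) atTop (𝓝 0) := by
    have h1 : Tendsto (fun q : ℕ => (1 - δ) ^ (q / M) * (a 0 - b 0)) atTop (𝓝 0) := by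
      have := (tendsto_pow_atTop_nhds_zero_of_lt_one (by linarith : (0:ℝ) ≤ 1 - δ)
        (by linarith)).comp hdiv
      simpa using this.mul_const (a 0 - b 0)
    exact squeeze_zero hosc_nn hosc_bound h1
  have hbdd : BddBelow (Set.range a) := by
    refine ⟨b 0, fun y hy => ?_⟩
    obtain ⟨q, rfl⟩ := hy
    exact le_trans (hbM (Nat.zero_le q)) (hba q)
  have hac : Tendsto a atTop (𝓝 (⨅ q, a q)) := tendsto_atTop_ciInf haA hbdd
  refine ⟨⨅ q, a q, fun i => ?_⟩
  have hbc : Tendsto b atTop (𝓝 (⨅ q, a q)) := by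
    have : Tendsto (fun q => a q - (a q - b q)) atTop (𝓝 ((⨅ q, a q) - 0)) := hac.sub hosc0
    simpa using this
  exact tendsto_of_tendsto_of_tendsto_of_le_of_le hbc hac
    (fun q => inf'_le _ (mem_univ i)) (fun q => le_sup' _ (mem_univ i))

end SyncCons

open SyncCons

/-- Synchronous consensus with fixed topology: if the digraph of the stochastic matrix `A`
contains a spanning tree, then the left products of the synchronous iteration matrices
converge to a rank-one matrix `𝟙 fᵀ`, where `f` is a nonnegative left fixed vector of `A`
summing to `1`; hence consensus is reached on the group decision value `fᵀ x(0)`. -/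
theorem synchronous_consensus_spanning_tree
    (n : ℕ) (hn : 1 ≤ n)
    (A : Matrix (Fin n) (Fin n) ℝ)
    (hnonneg : ∀ i j, 0 ≤ A i j)
    (hrow : ∀ i, ∑ j, A i j = 1)
    (hspan : ∃ root : Fin n, ∀ v : Fin n,
      Relation.ReflTransGen (fun i j : Fin n => i ≠ j ∧ 0 < A j i) root v)
    (τlo τhi : ℝ) (hτlo : 0 < τlo) (hττ : τlo ≤ τhi) :
    ∃ f : Fin n → ℝ,
      (∀ i, 0 ≤ f i) ∧ (∑ i, f i = 1) ∧ (∀ j, ∑ i, f i * A i j = f j) ∧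
      ∀ h : ℕ → ℝ, (∀ k, h k ∈ Set.Icc τlo τhi) →
        ∀ P : ℕ → Matrix (Fin n) (Fin n) ℝ,
          P 0 = 1 →
          (∀ q, P (q + 1) =
            (Real.exp (-h q) • (1 : Matrix (Fin n) (Fin n) ℝ)
              + (1 - Real.exp (-h q)) • A) * P q) →
          (∀ i j, Tendsto (fun q => P q i j) atTop (𝓝 (f j))) ∧
          ∀ x0 : Fin n → ℝ, ∀ i,
            Tendsto (fun q => (P q).mulVec x0 i) atTop (𝓝 (∑ j, f j * x0 j)) := by
  obtain ⟨r, hr⟩ := hspan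
  have H : (Finset.univ : Finset (Fin n)).Nonempty := ⟨⟨0, hn⟩, mem_univ _⟩
  set E : Fin n → Fin n → Prop := fun i j => i ≠ j ∧ 0 < A j i with hE
  set Bmat : ℝ → Matrix (Fin n) (Fin n) ℝ :=
    fun t => Real.exp (-t) • (1 : Matrix (Fin n) (Fin n) ℝ) + (1 - Real.exp (-t)) • A
    with hBmat
  have hBapp : ∀ t i j, Bmat t i j
      = Real.exp (-t) * (if i = j then 1 else 0) + (1 - Real.exp (-t)) * A i j := by
    intro t i j
    simp [hBmat, Matrix.add_apply, Matrix.smul_apply, Matrix.one_apply, smul_eq_mul]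
  -- minimal positive coupling weight
  set s : Finset (Fin n × Fin n) :=
    univ.filter (fun p : Fin n × Fin n => p.1 ≠ p.2 ∧ 0 < A p.2 p.1) with hs
  set cmin : ℝ := if hsne : s.Nonempty then s.inf' hsne (fun p => A p.2 p.1) else 1
    with hcmin
  have hcminpos : 0 < cmin := by
    rw [hcmin]
    split_ifs with hsne
    · obtain ⟨p, hp, hpe⟩ := Finset.exists_mem_eq_inf' hsne (fun p => A p.2 p.1)
      rw [hpe]
      exact ((Finset.mem_filter.1 hp).2).2
    · exact one_pos
  have hcminle : ∀ i j : Fin n, i ≠ j → 0 < A j i → cmin ≤ A j i := by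
    intro i j hij hA
    have hmem : (i, j) ∈ s := by simp [hs, hij, hA]
    have hsne : s.Nonempty := ⟨_, hmem⟩
    rw [hcmin, dif_pos hsne]
    exact Finset.inf'_le _ hmem
  set β : ℝ := 1 - Real.exp (-τlo) with hβdef
  have hβ : 0 < β := by
    have : Real.exp (-τlo) < 1 := Real.exp_lt_one_iff.2 (by linarith)
    simp [hβdef]; linarith
  set γ : ℝ := min (Real.exp (-τhi)) (β * cmin) with hγdef
  have hγ : 0 < γ := lt_min (Real.exp_pos _) (mul_pos hβ hcminpos)
  -- the class of matrices
  have hclass : ∀ t ∈ Set.Icc τlo τhi,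
      Stoch (Bmat t) ∧ (∀ i, γ ≤ Bmat t i i) ∧ ∀ i j, E i j → γ ≤ Bmat t j i := by
    intro t ht
    have he0 : (0:ℝ) < Real.exp (-t) := Real.exp_pos _
    have he1 : Real.exp (-t) ≤ 1 := Real.exp_le_one_iff.2 (by linarith [ht.1])
    refine ⟨⟨?_, ?_⟩, ?_, ?_⟩
    · intro i j
      rw [hBapp]
      have h0 : (0:ℝ) ≤ (if i = j then (1:ℝ) else 0) := by positivity
      exact add_nonneg (mul_nonneg he0.le h0) (mul_nonneg (by linarith) (hnonneg i j))
    · intro i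
      simp only [hBapp]
      rw [Finset.sum_add_distrib, ← Finset.mul_sum, ← Finset.mul_sum, hrow i]
      simp
    · intro i
      rw [hBapp]
      simp only [if_pos rfl]
      have h2 : Real.exp (-τhi) ≤ Real.exp (-t) := Real.exp_le_exp.2 (by linarith [ht.2])
      have h3 : 0 ≤ (1 - Real.exp (-t)) * A i i := by
        have := hnonneg i i; nlinarith
      calc γ ≤ Real.exp (-τhi) := min_le_left _ _
        _ ≤ Real.exp (-t) * 1 + (1 - Real.exp (-t)) * A i i := by nlinarith
    · intro i j hij
      rw [hBapp]
      rw [if_neg (Ne.symm hij.1)]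
      have h2 : Real.exp (-t) ≤ Real.exp (-τlo) := Real.exp_le_exp.2 (by linarith [ht.1])
      have h4 : β * cmin ≤ (1 - Real.exp (-t)) * A j i := by
        apply mul_le_mul (by rw [hβdef]; linarith) (hcminle i j hij.1 hij.2)
          hcminpos.le (by linarith)
      calc γ ≤ β * cmin := min_le_right _ _
        _ ≤ (1 - Real.exp (-t)) * A j i := h4
        _ = Real.exp (-t) * 0 + (1 - Real.exp (-t)) * A j i := by ring
  -- uniform window length
  have hreach := fun v => reach_pos E r hγ.le (hr v)
  choose ℓfun hℓ using hreach
  set M : ℕ := univ.sup ℓfun + 1 with hM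
  have hMpos : 0 < M := Nat.succ_pos _
  have hMge : ∀ v, ℓfun v ≤ M := fun v =>
    le_trans (Finset.le_sup (mem_univ v)) (Nat.le_succ _)
  set δ : ℝ := γ ^ M with hδdef
  have hδ : 0 < δ := pow_pos hγ M
  -- the key convergence principle for any admissible sequence
  have key : ∀ h : ℕ → ℝ, (∀ k, h k ∈ Set.Icc τlo τhi) →
      ∀ P : ℕ → Matrix (Fin n) (Fin n) ℝ, P 0 = 1 →
      (∀ q, P (q + 1) = Bmat (h q) * P q) → ∀ x : Fin n → ℝ,
      ∃ c, ∀ i, Tendsto (fun q => (P q).mulVec x i) atTop (𝓝 c) := by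
    intro h hh P hP0 hPrec x
    have hB : ∀ k, Stoch (Bmat (h k)) := fun k => (hclass _ (hh k)).1
    have hwin : ∀ q v, δ ≤ Wprod (fun k => Bmat (h (q + k))) M v r := by
      intro q v
      exact hℓ v M (hMge v) _ (fun k => hclass _ (hh (q + k)))
    exact vec_conv H hδ hMpos hB hwin hP0 hPrec x
  -- construct f via the constant sequence
  set Bc : Matrix (Fin n) (Fin n) ℝ := Bmat τlo with hBc
  set Pc : ℕ → Matrix (Fin n) (Fin n) ℝ := fun q => Bc ^ q with hPc
  have hPc0 : Pc 0 = 1 := pow_zero Bc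
  have hPcrec : ∀ q, Pc (q + 1) = Bmat τlo * Pc q := fun q => pow_succ' Bc q
  have hkeyc := key (fun _ => τlo) (fun _ => ⟨le_refl _, hττ⟩) Pc hPc0 hPcrec
  choose f hf using fun j => hkeyc (Pi.single j 1)
  have hfent : ∀ j i, Tendsto (fun q => Pc q i j) atTop (𝓝 (f j)) := by
    intro j i
    have := hf j i
    simpa [Matrix.mulVec_single] using this
  have hPcst : ∀ q, Stoch (Pc q) := by
    intro q
    induction q with
    | zero => rw [hPc0]; exact Stoch.one
    | succ q ih => rw [hPcrec]; exact ((hclass τlo ⟨le_refl _, hττ⟩).1).mul ih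
  have i0 : Fin n := ⟨0, hn⟩
  -- nonnegativity
  have hfnn : ∀ j, 0 ≤ f j := by
    intro j
    exact ge_of_tendsto (hfent j i0) (Eventually.of_forall fun q => (hPcst q).1 i0 j)
  -- sums to one
  have hfsum : ∑ j, f j = 1 := by
    have h1 : Tendsto (fun q => ∑ j, Pc q i0 j) atTop (𝓝 (∑ j, f j)) :=
      tendsto_finset_sum univ (fun j _ => hfent j i0)
    have h2 : Tendsto (fun q => ∑ j, Pc q i0 j) atTop (𝓝 1) := by
      simpa [funext fun q => (hPcst q).2 i0] using tendsto_const_nhds (α := ℝ) (f := atTop (α := ℕ))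
    exact tendsto_nhds_unique h1 h2
  -- left fixed vector for Bc
  have hfixB : ∀ j, ∑ k, f k * Bc k j = f j := by
    intro j
    have h1 : Tendsto (fun q => Pc (q + 1) i0 j) atTop (𝓝 (f j)) :=
      (hfent j i0).comp (tendsto_add_atTop_nat 1)
    have h2 : Tendsto (fun q => Pc (q + 1) i0 j) atTop (𝓝 (∑ k, f k * Bc k j)) := by
      have hexp : ∀ q, Pc (q + 1) i0 j = ∑ k, Pc q i0 k * Bc k j := by
        intro q
        rw [hPc]
        show (Bc ^ (q + 1)) i0 j = _
        rw [pow_succ, Matrix.mul_apply]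
      simp only [hexp]
      refine tendsto_finset_sum univ (fun k _ => ?_)
      have := (hfent k i0).mul_const (Bc k j)
      exact this
    exact tendsto_nhds_unique h2 h1
  have hgen : ∀ (e : ℝ) (j : Fin n),
      ∑ x, f x * ((e * if x = j then (1:ℝ) else 0) + (1 - e) * A x j)
        = e * f j + (1 - e) * ∑ k, f k * A k j := by
    intro e j
    have h1 : ∀ x, f x * ((e * if x = j then (1:ℝ) else 0) + (1 - e) * A x j)
        = e * (if x = j then f x else 0) + (1 - e) * (f x * A x j) := by
      intro x; by_cases hx : x = j <;> simp [hx] <;> ring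
    rw [Finset.sum_congr rfl fun x _ => h1 x, Finset.sum_add_distrib,
      ← Finset.mul_sum, ← Finset.mul_sum, Finset.sum_ite_eq' univ j f]
    simp
  -- left fixed vector for A
  have hfixA : ∀ j, ∑ i, f i * A i j = f j := by
    intro j
    have he : Real.exp (-τlo) < 1 := Real.exp_lt_one_iff.2 (by linarith)
    have hsplit : ∑ k, f k * Bc k j
        = Real.exp (-τlo) * f j + (1 - Real.exp (-τlo)) * ∑ k, f k * A k j := by
      rw [hBc]
      simp only [hBapp]
      exact hgen (Real.exp (-τlo)) j
    have := hfixB j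
    rw [hsplit] at this
    have h5 : (1 - Real.exp (-τlo)) * (∑ k, f k * A k j) = (1 - Real.exp (-τlo)) * f j := by
      linarith
    exact mul_left_cancel₀ (by linarith) h5
  -- the f^T-invariance of products
  have hfixBt : ∀ t ∈ Set.Icc τlo τhi, ∀ j, ∑ i, f i * Bmat t i j = f j := by
    intro t ht j
    simp only [hBapp]
    rw [hgen (Real.exp (-t)) j, hfixA j]
    ring
  refine ⟨f, hfnn, hfsum, hfixA, ?_⟩
  intro h hh P hP0 hPrec
  have hPrec' : ∀ q, P (q + 1) = Bmat (h q) * P q := hPrec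
  choose g hg using fun j => key h hh P hP0 hPrec' (Pi.single j 1)
  have hgent : ∀ j i, Tendsto (fun q => P q i j) atTop (𝓝 (g j)) := by
    intro j i
    have := hg j i
    simpa [Matrix.mulVec_single] using this
  have hinv : ∀ q j, ∑ i, f i * P q i j = f j := by
    intro q
    induction q with
    | zero =>
      intro j
      rw [hP0]
      simp [Matrix.one_apply, mul_ite, Finset.sum_ite_eq]
    | succ q ih =>
      intro j
      rw [hPrec']
      simp only [Matrix.mul_apply, Finset.mul_sum]
      rw [Finset.sum_comm]
      calc ∑ k, ∑ i, f i * (Bmat (h q) i k * P q k j)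
          = ∑ k, (∑ i, f i * Bmat (h q) i k) * P q k j := by
            congr 1; funext k
            rw [Finset.sum_mul]
            congr 1; funext i
            ring
        _ = ∑ k, f k * P q k j := by
            congr 1; funext k
            rw [hfixBt (h q) (hh q) k]
        _ = f j := ih j
  have hgf : ∀ j, g j = f j := by
    intro j
    have h1 : Tendsto (fun q => ∑ i, f i * P q i j) atTop (𝓝 (∑ i, f i * g j)) :=
      tendsto_finset_sum univ (fun i _ => (hgent j i).const_mul (f i))
    have h2 : (∑ i, f i * g j) = g j := by
      rw [← Finset.sum_mul, hfsum, one_mul]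
    rw [h2] at h1
    have h3 : Tendsto (fun q => ∑ i, f i * P q i j) atTop (𝓝 (f j)) := by
      simpa [funext fun q => hinv q j] using tendsto_const_nhds (α := ℝ) (f := atTop (α := ℕ))
    exact tendsto_nhds_unique h1 h3
  constructor
  · intro i j
    have := hgent j i
    rwa [hgf j] at this
  · intro x0 i
    have hexp : ∀ q, (P q).mulVec x0 i = ∑ j, P q i j * x0 j := by
      intro q; rw [Matrix.mulVec, dotProduct]
    simp only [hexp]
    refine tendsto_finset_sum univ (fun j _ => ?_)
    have := (hgent j i).mul_const (x0 j)
    rwa [hgf j] at this
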